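/- (Improved distance bound in Steane's construction.) Let C ⊆ C' be linear codes over F_2 of length n, let d be the minimum distance of C and let d'_2 be the second generalized distance of C', i.e., the minimum of |supp(u) ∪ supp(v)| over all pairs of distinct nonzero codewords u, v ∈ C'. Let W be an F_2-subspace of F_2^n with C ∩ W = {0} and C + W = C'. Let σ be a permutation of the n coordinates, with P denoting the induced linear map on F_2^n permuting coordinates by σ, and assume: C ∩ P(W) = {0}, C + P(W) = C', and for every nonzero c ∈ W one has c + P(c) ∉ C. Then for all a, b ∈ C and c ∈ W with (a + c, b + P(c)) ≠ (0, 0), the generalized weight |supp(a + c) ∪ supp(b + P(c))| is at least min(d, d'_2). -/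
import Mathlib


/-- The support of a vector in `F_2^n`: the set of coordinates where it is nonzero. -/
def supp {n : ℕ} (u : Fin n → ZMod 2) : Finset (Fin n) :=
  Finset.univ.filter fun i => u i ≠ 0

/-- The linear map on `F_2^n` permuting coordinates by `σ`: it sends `u` to `i ↦ u (σ i)`. -/
def permMap {n : ℕ} (σ : Equiv.Perm (Fin n)) :
    (Fin n → ZMod 2) →ₗ[ZMod 2] (Fin n → ZMod 2) :=
  LinearMap.funLeft (ZMod 2) (ZMod 2) σ

lemma supp_card_eq {n : ℕ} (u : Fin n → ZMod 2) : (supp u).card = hammingNorm u := rfl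

lemma self_add_self {n : ℕ} (v : Fin n → ZMod 2) : v + v = 0 :=
  funext fun _ => CharTwo.add_self_eq_zero _

/-- improved distance bound in Steane's construction: Let `C ⊆ C'` be
binary linear codes of length `n`, where every nonzero codeword of `C` has weight at
least `d`, and where `d'₂` is a lower bound on the second generalized distance of `C'`,
i.e. `|supp(u) ∪ supp(v)| ≥ d'₂` for all distinct nonzero `u, v ∈ C'`.  Let `W` be a
subspace with `C ∩ W = 0`, `C + W = C'`, let `P` be the coordinate permutation map
induced by `σ`, and assume `C ∩ P(W) = 0`, `C + P(W) = C'`, and `c + P(c) ∉ C` for every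
nonzero `c ∈ W`.  Then every nonzero pair `(a + c, b + P c)` with `a, b ∈ C`, `c ∈ W` has
generalized weight `|supp(a + c) ∪ supp(b + P c)| ≥ min(d, d'₂)`. -/
theorem steane_improved_distance_bound (n d d'₂ : ℕ)
    (C C' : Submodule (ZMod 2) (Fin n → ZMod 2)) (hCC' : C ≤ C')
    (hd : ∀ u ∈ C, u ≠ 0 → d ≤ hammingNorm u)
    (hd2 : ∀ u ∈ C', ∀ v ∈ C', u ≠ 0 → v ≠ 0 → u ≠ v →
      d'₂ ≤ (supp u ∪ supp v).card)
    (W : Submodule (ZMod 2) (Fin n → ZMod 2)) (σ : Equiv.Perm (Fin n))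
    (hCW : C ⊓ W = ⊥) (hCWsum : C ⊔ W = C')
    (hCPW : C ⊓ W.map (permMap σ) = ⊥) (hCPWsum : C ⊔ W.map (permMap σ) = C')
    (hfix : ∀ c ∈ W, c ≠ 0 → c + permMap σ c ∉ C) :
    ∀ a ∈ C, ∀ b ∈ C, ∀ c ∈ W, (a + c, b + permMap σ c) ≠ (0, 0) →
      min d d'₂ ≤ (supp (a + c) ∪ supp (b + permMap σ c)).card := by
  intro a ha b hb c hc hne
  by_cases hc0 : c = 0
  · subst hc0
    simp only [map_zero, add_zero] at hne ⊢
    rcases (by by_cases h : a = 0 <;> simp [h, Prod.ext_iff] at hne ⊢ <;> tauto :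
        a ≠ 0 ∨ b ≠ 0) with h | h
    · calc min d d'₂ ≤ d := min_le_left _ _
        _ ≤ hammingNorm a := hd a ha h
        _ = (supp a).card := (supp_card_eq a).symm
        _ ≤ _ := Finset.card_le_card Finset.subset_union_left
    · calc min d d'₂ ≤ d := min_le_left _ _
        _ ≤ hammingNorm b := hd b hb h
        _ = (supp b).card := (supp_card_eq b).symm
        _ ≤ _ := Finset.card_le_card Finset.subset_union_right
  · have hWle : W ≤ C' := hCWsum ▸ le_sup_right
    have hPWle : W.map (permMap σ) ≤ C' := hCPWsum ▸ le_sup_right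
    have hPc : permMap σ c ∈ W.map (permMap σ) := Submodule.mem_map_of_mem hc
    have hx : a + c ∈ C' := C'.add_mem (hCC' ha) (hWle hc)
    have hy : b + permMap σ c ∈ C' := C'.add_mem (hCC' hb) (hPWle hPc)
    have hxne : a + c ≠ 0 := by
      intro h
      have : c = a := by
        have := congrArg (a + ·) h
        simpa [← add_assoc, self_add_self] using this
      exact hc0 (by
        have : c ∈ C ⊓ W := ⟨this ▸ ha, hc⟩
        simpa [hCW] using this)
    have hyne : b + permMap σ c ≠ 0 := by
      intro h
      have h2 : permMap σ c = b := by
        have := congrArg (b + ·) h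
        simpa [← add_assoc, self_add_self] using this
      have : permMap σ c ∈ C ⊓ W.map (permMap σ) := ⟨h2 ▸ hb, hPc⟩
      rw [hCPW, Submodule.mem_bot] at this
      have : c = 0 := by
        have := congrFun this
        exact funext fun i => by simpa [permMap, LinearMap.funLeft] using this (σ.symm i)
      exact hc0 this
    have hxy : a + c ≠ b + permMap σ c := by
      intro h
      apply hfix c hc hc0
      have h2 : ∀ x y : Fin n → ZMod 2, x = y ↔ x + y = 0 := by
        intro x y
        constructor
        · rintro rfl; exact self_add_self _
        · intro hxy
          have := congrArg (· + y) hxy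
          simpa [add_assoc, self_add_self] using this
      have : c + permMap σ c = b + a := by
        rw [h2] at h ⊢
        rw [show c + permMap σ c + (b + a) = a + c + (b + permMap σ c) by abel]
        exact h
      rw [this]; exact C.add_mem hb ha
    calc min d d'₂ ≤ d'₂ := min_le_right _ _
      _ ≤ _ := hd2 _ hx _ hy hxne hyne hxy
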